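/- For a convex differentiable function f, L-Lipschitz continuity of ∇f implies the cocoercivity inequality ⟨∇f(y) - ∇f(x), y - x⟩ ≥ (1/L) ‖∇f(y) - ∇f(x)‖² for all x, y. -/

import Mathlib

open scoped RealInnerProductSpace
open Set InnerProductSpace Filter Topology

variable {E : Type*} [NormedAddCommGroup E] [InnerProductSpace ℝ E] [CompleteSpace E]

lemma line_hasDerivAt (f : E → ℝ) (f' : E → E) (hgrad : ∀ z, HasGradientAt f (f' z) z)
    (x v : E) (t : ℝ) :
    HasDerivAt (fun s : ℝ => f (x + s • v)) ⟪f' (x + t • v), v⟫ t := by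
  have hc : HasDerivAt (fun s : ℝ => x + s • v) v t := by
    simpa using ((hasDerivAt_id t).smul_const v).const_add x
  have hf := (hasGradientAt_iff_hasFDerivAt.mp (hgrad (x + t • v)))
  have := hf.comp_hasDerivAt t hc
  simpa [toDual_apply_apply, Function.comp_def] using this

lemma grad_ineq (f : E → ℝ) (f' : E → E) (hconv : ConvexOn ℝ Set.univ f)
    (hgrad : ∀ z, HasGradientAt f (f' z) z) (x y : E) :
    f x + ⟪f' x, y - x⟫ ≤ f y := by
  set g : ℝ → ℝ := fun s => f (x + s • (y - x)) with hg
  have hd : HasDerivAt g ⟪f' x, y - x⟫ 0 := by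
    simpa using line_hasDerivAt f f' hgrad x (y - x) 0
  have hslope : Tendsto (slope g 0) (𝓝[>] (0:ℝ)) (𝓝 ⟪f' x, y - x⟫) :=
    (hasDerivAt_iff_tendsto_slope.mp hd).mono_left
      (nhdsWithin_mono 0 (fun t ht => ne_of_gt ht))
  have hev : ∀ᶠ t in 𝓝[>] (0:ℝ), slope g 0 t ≤ f y - f x := by
    filter_upwards [Ioc_mem_nhdsGT (zero_lt_one)] with t ht
    have hcv := hconv.2 (mem_univ x) (mem_univ y) (by linarith [ht.2] : (0:ℝ) ≤ 1 - t)
      ht.1.le (by ring)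
    have heq : (1 - t) • x + t • y = x + t • (y - x) := by module
    rw [heq] at hcv
    have h1 : g t - g 0 ≤ (f y - f x) * t := by
      simp only [hg, zero_smul, add_zero]
      simp only [smul_eq_mul] at hcv
      nlinarith [hcv]
    have h2 : slope g 0 t = (g t - g 0) / t := by simp [slope_def_field]
    rw [h2, div_le_iff₀ ht.1]
    exact h1
  linarith [le_of_tendsto hslope hev]

lemma descent (f : E → ℝ) (f' : E → E) (hgrad : ∀ z, HasGradientAt f (f' z) z)
    (L : ℝ) (hL : 0 < L) (hlip : ∀ x y, ‖f' x - f' y‖ ≤ L * ‖x - y‖) (x y : E) :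
    f y ≤ f x + ⟪f' x, y - x⟫ + L / 2 * ‖y - x‖ ^ 2 := by
  have hf'cont : Continuous f' := by
    refine (LipschitzWith.of_dist_le_mul (K := L.toNNReal) (f := f') ?_).continuous
    intro a b
    rw [dist_eq_norm, dist_eq_norm]
    simpa [Real.coe_toNNReal L hL.le] using hlip a b
  set g' : ℝ → ℝ := fun t => ⟪f' (x + t • (y - x)), y - x⟫ with hg'
  have hcont : Continuous g' := by
    apply Continuous.inner
    · exact hf'cont.comp (by continuity)
    · exact continuous_const
  have hftc' : ∫ t in (0:ℝ)..1, g' t = f y - f x := by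
    have h := intervalIntegral.integral_eq_sub_of_hasDerivAt (a := (0:ℝ)) (b := 1)
      (f := fun s : ℝ => f (x + s • (y - x))) (f' := g')
      (fun t _ => line_hasDerivAt f f' hgrad x (y - x) t) (hcont.intervalIntegrable 0 1)
    simpa using h
  have hbound : ∀ t ∈ Icc (0:ℝ) 1, g' t ≤ ⟪f' x, y - x⟫ + (L * ‖y - x‖ ^ 2) * t := by
    intro t ht
    have h1 : g' t - ⟪f' x, y - x⟫ = ⟪f' (x + t • (y - x)) - f' x, y - x⟫ := by
      simp [hg', inner_sub_left]
    have h2 : ⟪f' (x + t • (y - x)) - f' x, y - x⟫ ≤ ‖f' (x + t • (y - x)) - f' x‖ * ‖y - x‖ :=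
      real_inner_le_norm _ _
    have h3 : ‖f' (x + t • (y - x)) - f' x‖ ≤ L * (t * ‖y - x‖) := by
      have := hlip (x + t • (y - x)) x
      simpa [norm_smul, abs_of_nonneg ht.1] using this
    nlinarith [norm_nonneg (y - x), norm_nonneg (f' (x + t • (y - x)) - f' x), ht.1]
  have hmono : ∫ t in (0:ℝ)..1, g' t ≤
      ∫ t in (0:ℝ)..1, (⟪f' x, y - x⟫ + (L * ‖y - x‖ ^ 2) * t) := by
    apply intervalIntegral.integral_mono_on zero_le_one (hcont.intervalIntegrable 0 1)
      ((by continuity : Continuous fun t : ℝ => ⟪f' x, y - x⟫ + (L * ‖y - x‖ ^ 2) * t).intervalIntegrable 0 1)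
    exact hbound
  have hrhs : ∫ t in (0:ℝ)..1, (⟪f' x, y - x⟫ + (L * ‖y - x‖ ^ 2) * t) =
      ⟪f' x, y - x⟫ + L / 2 * ‖y - x‖ ^ 2 := by
    rw [intervalIntegral.integral_add (continuous_const.intervalIntegrable 0 1)
        ((by continuity : Continuous fun t : ℝ => (L * ‖y - x‖ ^ 2) * t).intervalIntegrable 0 1),
      intervalIntegral.integral_const_mul, integral_id,
      intervalIntegral.integral_const]
    simp
    ring
  rw [hftc'] at hmono
  rw [hrhs] at hmono
  linarith

lemma key_ineq (f : E → ℝ) (f' : E → E) (hconv : ConvexOn ℝ Set.univ f)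
    (hgrad : ∀ z, HasGradientAt f (f' z) z)
    (L : ℝ) (hL : 0 < L) (hlip : ∀ x y, ‖f' x - f' y‖ ≤ L * ‖x - y‖) (x y : E) :
    f x + ⟪f' x, y - x⟫ + 1 / (2 * L) * ‖f' y - f' x‖ ^ 2 ≤ f y := by
  set G : E := f' y - f' x with hG
  set z : E := y - (1 / L) • G with hz
  have h1 : f x + ⟪f' x, z - x⟫ ≤ f z := grad_ineq f f' hconv hgrad x z
  have h2 : f z ≤ f y + ⟪f' y, z - y⟫ + L / 2 * ‖z - y‖ ^ 2 :=
    descent f f' hgrad L hL hlip y z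
  have hzy : z - y = -((1 / L) • G) := by rw [hz]; abel
  have hnorm : ‖z - y‖ ^ 2 = (1 / L) ^ 2 * ‖G‖ ^ 2 := by
    rw [hzy, norm_neg, norm_smul, Real.norm_eq_abs, abs_of_pos (by positivity : (0:ℝ) < 1 / L)]
    ring
  have hiy : ⟪f' y, z - y⟫ = -(1 / L) * ⟪f' y, G⟫ := by
    rw [hzy, inner_neg_right, real_inner_smul_right]; ring
  have hix : ⟪f' x, z - x⟫ = ⟪f' x, y - x⟫ - (1 / L) * ⟪f' x, G⟫ := by
    have : z - x = (y - x) + -((1 / L) • G) := by rw [hz]; abel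
    rw [this, inner_add_right, inner_neg_right, real_inner_smul_right]; ring
  have hGG : ⟪f' y, G⟫ - ⟪f' x, G⟫ = ‖G‖ ^ 2 := by
    rw [← inner_sub_left, ← hG, real_inner_self_eq_norm_sq]
  rw [hix] at h1
  rw [hiy, hnorm] at h2
  have hL' : L ≠ 0 := ne_of_gt hL
  have hc1 : L / 2 * ((1 / L) ^ 2 * ‖G‖ ^ 2) = 1 / (2 * L) * ‖G‖ ^ 2 := by
    field_simp
  have hc2 : (1 / L) * ⟪f' y, G⟫ - (1 / L) * ⟪f' x, G⟫ = (1 / L) * ‖G‖ ^ 2 := by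
    rw [← mul_sub, hGG]
  have hc3 : (1 / L) * ‖G‖ ^ 2 = 2 * (1 / (2 * L) * ‖G‖ ^ 2) := by
    field_simp
  linarith [h1, h2]

theorem lipschitz_grad_implies_cocoercive {d : ℕ}
    (f : EuclideanSpace ℝ (Fin d) → ℝ) (f' : EuclideanSpace ℝ (Fin d) → EuclideanSpace ℝ (Fin d))
    (hconv : ConvexOn ℝ Set.univ f)
    (hgrad : ∀ z, HasGradientAt f (f' z) z)
    (L : ℝ) (hL : 0 < L)
    (hlip : ∀ x y, ‖f' x - f' y‖ ≤ L * ‖x - y‖) :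
    ∀ x y, ⟪f' y - f' x, y - x⟫ ≥ (1 / L) * ‖f' y - f' x‖ ^ 2 := by
  intro x y
  have h1 := key_ineq f f' hconv hgrad L hL hlip x y
  have h2 := key_ineq f f' hconv hgrad L hL hlip y x
  have hsym : ‖f' x - f' y‖ = ‖f' y - f' x‖ := norm_sub_rev _ _
  rw [hsym] at h2
  have e1 : ⟪f' y, x - y⟫ = -⟪f' y, y - x⟫ := by
    rw [← inner_neg_right]; congr 1; abel
  rw [e1] at h2
  have e2 : ⟪f' y - f' x, y - x⟫ = ⟪f' y, y - x⟫ - ⟪f' x, y - x⟫ := inner_sub_left _ _ _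
  rw [e2]
  have hL' : L ≠ 0 := ne_of_gt hL
  have : 1 / (2 * L) * ‖f' y - f' x‖ ^ 2 + 1 / (2 * L) * ‖f' y - f' x‖ ^ 2
      = (1 / L) * ‖f' y - f' x‖ ^ 2 := by field_simp; ring
  linarith [h1, h2]
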